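/- arXiv:1908.03827 — 2 statements merged into one kernel-verified Lean document; each statement's English description precedes it below -/
import Mathlib

section
/- Fix ξ ∈ 𝔹_T^N and D ≥ 0. The linear system η_I = ξ̂ − ξ_I + Σ_{(R,α)} p°_{(R,α)} η_{α̃(I)} for all nonempty I ⊆ {1,…,N} with |I| ≤ D+1, together with the normalization Σ_{i=1}^N π_i η_{{i}} = 0, has exactly one solution, and it is given by η_I = ⟨x̂ − x_I⟩°_ξ, where x_I := Π_{i∈I} x_i and ξ_I := Π_{i∈I} ξ_i. -/
open Finset Filter Asymptotics Topology

namespace Evo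

/-- A population state: each of the `N` individuals has type `A` (`true`) or `B` (`false`). -/
abbrev St (N : ℕ) := Fin N → Bool

/-- A replacement event `(R, α)`: the set `R` of replaced individuals together with a
parentage map (only the values on `R` are relevant). -/
abbrev Event (N : ℕ) := Finset (Fin N) × (Fin N → Fin N)

/-- The extended parentage map `α̃`, equal to `α` on `R` and the identity off `R`. -/
def extMap {N : ℕ} (e : Event N) (i : Fin N) : Fin N := if i ∈ e.1 then e.2 i else i

/-- The state update induced by a replacement event: `x ↦ x_α̃`. -/
def upd {N : ℕ} (e : Event N) (x : St N) : St N := fun i => x (extMap e i)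

/-- Boolean values as reals. -/
def bv (b : Bool) : ℝ := if b then 1 else 0

/-- The all-`A` state. -/
def stA (N : ℕ) : St N := fun _ => true

/-- The all-`B` state. -/
def stB (N : ℕ) : St N := fun _ => false

/-- Transient (non-monoallelic) states, i.e. members of `𝔹_T^N`. -/
def Transient {N : ℕ} (x : St N) : Prop := x ≠ stA N ∧ x ≠ stB N

/-- A replacement rule: for each state, a probability distribution over replacement events. -/
def IsRule {N : ℕ} (p : St N → Event N → ℝ) : Prop :=
  (∀ x e, 0 ≤ p x e) ∧ ∀ x, ∑ e : Event N, p x e = 1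

/-- A state-independent distribution over replacement events (a neutral replacement rule). -/
def IsDist {N : ℕ} (p0 : Event N → ℝ) : Prop :=
  (∀ e, 0 ≤ p0 e) ∧ ∑ e : Event N, p0 e = 1

/-- Transition matrix of the Markov chain induced by a replacement rule. -/
def tmat {N : ℕ} (p : St N → Event N → ℝ) : Matrix (St N) (St N) ℝ :=
  Matrix.of fun x y => ∑ e : Event N, if upd e x = y then p x e else 0

/-- The Fixation Axiom. -/
def FixAxiom {N : ℕ} (p : St N → Event N → ℝ) : Prop :=
  ∃ (i : Fin N) (m : ℕ) (ev : Fin m → Event N), 1 ≤ m ∧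
    (∀ k x, 0 < p x (ev k)) ∧ (∃ k, i ∈ (ev k).1) ∧
    (∀ j, (List.ofFn fun k => extMap (ev k)).foldr (· ∘ ·) id j = i)

/-- The sojourn time `t_ξ(x)`: expected number of visits to `x` prior to absorption,
starting from `ξ` (expressed as `Σ_t (P^t)(ξ, x)`). -/
noncomputable def sojourn {N : ℕ} (p : St N → Event N → ℝ) (ξ x : St N) : ℝ :=
  ∑' t : ℕ, (tmat p ^ t) ξ x

/-- The operator `⟨φ⟩_ξ = Σ_{t=0}^∞ E[φ(x^t) | x⁰ = ξ]` for the chain with rule `p`. -/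
noncomputable def sgen {N : ℕ} (p : St N → Event N → ℝ) (ξ : St N) (φ : St N → ℝ) : ℝ :=
  ∑' t : ℕ, ∑ x : St N, (tmat p ^ t) ξ x * φ x

/-- The marginal probability `e_ij` that `i` transmits its offspring to `j`,
for a distribution `q` over replacement events. -/
def emarg {N : ℕ} (q : Event N → ℝ) (i j : Fin N) : ℝ :=
  ∑ e : Event N, if j ∈ e.1 ∧ e.2 j = i then q e else 0

/-- `π` is the vector of reproductive values for the neutral rule `p°`:
`Σ_j e°_ij π_j = Σ_j e°_ji π_i` for all `i`, and `Σ_i π_i = 1`. -/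
def IsRV {N : ℕ} (p0 : Event N → ℝ) (π : Fin N → ℝ) : Prop :=
  (∀ i, ∑ j, emarg p0 i j * π j = ∑ j, emarg p0 j i * π i) ∧ (∑ i, π i = 1)

/-- The reproductive-value-weighted frequency `x̂ = Σ_i π_i x_i`. -/
def hatx {N : ℕ} (π : Fin N → ℝ) (x : St N) : ℝ := ∑ i, π i * bv (x i)

/-- The multilinear monomial `x_I = Π_{i ∈ I} x_i`. -/
def prodI {N : ℕ} (x : St N) (I : Finset (Fin N)) : ℝ := ∏ i ∈ I, bv (x i)

/-- The linear system defining the sojourn quantities `η_I`: for every nonempty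
`I ⊆ {1,…,N}` with `|I| ≤ D + 1`, `η_I = E(I) + Σ_{(R,α)} p°_{(R,α)} η_{α̃(I)}`,
together with the normalization `Σ_i π_i η_{{i}} = 0`. -/
def EtaSystem {N : ℕ} (p0 : Event N → ℝ) (π : Fin N → ℝ) (E : Finset (Fin N) → ℝ)
    (D : ℕ) (η : Finset (Fin N) → ℝ) : Prop :=
  (∀ I : Finset (Fin N), 1 ≤ I.card → I.card ≤ D + 1 →
    η I = E I + ∑ e : Event N, p0 e * η (I.image (extMap e))) ∧
  (∑ i, π i * η {i} = 0)

section AuxMatrix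

variable {N : ℕ}

instance (x : St N) : Decidable (Transient x) :=
  decidable_of_iff (x ≠ stA N ∧ x ≠ stB N) Iff.rfl

variable (p0 : Event N → ℝ)
local notation "P" => tmat (fun _ : St N => p0)

lemma tmat_apply (x y : St N) :
    (P) x y = ∑ e : Event N, if upd e x = y then p0 e else 0 := rfl

variable (h0 : ∀ e : Event N, 0 ≤ p0 e) (h1 : ∑ e : Event N, p0 e = 1)

include h0 in
lemma tmat_nonneg (x y : St N) : 0 ≤ (P) x y := by
  rw [tmat_apply]
  exact Finset.sum_nonneg fun e _ => by split <;> simp [h0 e]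

include h0 in
lemma pow_nonneg' (t : ℕ) (x y : St N) : 0 ≤ ((P) ^ t) x y := by
  induction t generalizing x y with
  | zero => simp [Matrix.one_apply]; split <;> norm_num
  | succ t ih =>
    rw [pow_succ, Matrix.mul_apply]
    exact Finset.sum_nonneg fun z _ => mul_nonneg (ih x z) (tmat_nonneg p0 h0 z y)

include h1 in
lemma row_sum (x : St N) : ∑ y, (P) x y = 1 := by
  simp only [tmat_apply]
  rw [Finset.sum_comm]
  simp only [Finset.sum_ite_eq, Finset.mem_univ, if_true]
  exact h1

include h1 in
lemma pow_row_sum (t : ℕ) (x : St N) : ∑ y, ((P) ^ t) x y = 1 := by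
  induction t generalizing x with
  | zero => simp [Matrix.one_apply]
  | succ t ih =>
    simp only [pow_succ, Matrix.mul_apply]
    calc ∑ y, ∑ z, ((P)^t) x z * (P) z y = ∑ z, ((P)^t) x z * ∑ y, (P) z y := by
          rw [Finset.sum_comm]; simp [Finset.mul_sum]
      _ = 1 := by simp only [row_sum p0 h1]; simpa using ih x

lemma step_sum (x : St N) (ψ : St N → ℝ) :
    ∑ y, (P) x y * ψ y = ∑ e : Event N, p0 e * ψ (upd e x) := by
  simp only [tmat_apply, Finset.sum_mul]
  rw [Finset.sum_comm]
  congr 1; ext e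
  rw [Finset.sum_congr rfl (fun y _ => by
    show (if upd e x = y then p0 e else 0) * ψ y = if upd e x = y then p0 e * ψ y else 0
    split <;> simp_all)]
  simp [Finset.sum_ite_eq]

lemma pow_succ_sum (t : ℕ) (ξ : St N) (ψ : St N → ℝ) :
    ∑ y, ((P) ^ (t+1)) ξ y * ψ y = ∑ x, ((P) ^ t) ξ x * ∑ e : Event N, p0 e * ψ (upd e x) := by
  simp only [pow_succ, Matrix.mul_apply, Finset.sum_mul]
  rw [Finset.sum_comm]
  refine Finset.sum_congr rfl fun x _ => ?_
  rw [← step_sum p0 x ψ, Finset.mul_sum]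
  exact Finset.sum_congr rfl fun y _ => by ring

/-! Absorbing states -/

lemma nontrans_fix {x : St N} (hx : ¬Transient x) (e : Event N) : upd e x = x := by
  rcases not_and_or.1 hx with hA | hB
  · rw [not_ne_iff.1 hA]; rfl
  · rw [not_ne_iff.1 hB]; rfl

include h1 in
lemma pow_fix {x : St N} (hx : ∀ e : Event N, upd e x = x) (t : ℕ) (y : St N) :
    ((P) ^ t) x y = if x = y then 1 else 0 := by
  induction t generalizing y with
  | zero => exact Matrix.one_apply
  | succ t ih =>
    rw [pow_succ', Matrix.mul_apply]
    have hP : ∀ z, (P) x z = if x = z then 1 else 0 := by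
      intro z
      rw [tmat_apply]
      simp only [hx]
      split <;> simp [h1]
    calc ∑ z, (P) x z * ((P)^t) z y
        = ∑ z, if x = z then ((P)^t) z y else 0 := by
          refine Finset.sum_congr rfl fun z _ => ?_
          rw [hP z]; split <;> simp
      _ = ((P)^t) x y := by simp [Finset.sum_ite_eq]
      _ = if x = y then 1 else 0 := ih y

/-! Path lower bounds -/

def updL (L : List (Event N)) (x : St N) : St N := L.foldl (fun s e => upd e s) x

lemma updL_eq (L : List (Event N)) (x : St N) :
    updL L x = fun j => x ((L.map extMap).foldr (· ∘ ·) id j) := by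
  induction L generalizing x with
  | nil => rfl
  | cons e L ih =>
    show updL L (upd e x) = _
    rw [ih (upd e x)]
    rfl

include h0 in
lemma path_lb : ∀ (L : List (Event N)) (x : St N),
    (L.map p0).prod ≤ ((P) ^ L.length) x (updL L x) := by
  intro L
  induction L with
  | nil => intro x; simp [updL, Matrix.one_apply_eq]
  | cons e L ih =>
    intro x
    have hy : updL (e :: L) x = updL L (upd e x) := rfl
    rw [List.length_cons, hy, List.map_cons, List.prod_cons, pow_succ', Matrix.mul_apply]
    have h2 : p0 e ≤ (P) x (upd e x) := by
      rw [tmat_apply]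
      have := Finset.single_le_sum (f := fun e' : Event N => if upd e' x = upd e x then p0 e' else 0)
        (fun e' _ => by split <;> simp [h0 e']) (Finset.mem_univ e)
      simpa using this
    have h3 : (List.map p0 L).prod ≤ ((P)^L.length) (upd e x) (updL L (upd e x)) := ih (upd e x)
    have hprodnn : 0 ≤ (List.map p0 L).prod :=
      List.prod_nonneg (by rintro a ha; obtain ⟨e', _, rfl⟩ := List.mem_map.1 ha; exact h0 e')
    calc p0 e * (List.map p0 L).prod
        ≤ (P) x (upd e x) * ((P)^L.length) (upd e x) (updL L (upd e x)) :=
          mul_le_mul h2 h3 hprodnn (tmat_nonneg p0 h0 _ _)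
      _ ≤ ∑ z, (P) x z * ((P)^L.length) z (updL L (upd e x)) := by
          refine Finset.single_le_sum (f := fun z => (P) x z * ((P)^L.length) z (updL L (upd e x)))
            (fun z _ => mul_nonneg (tmat_nonneg p0 h0 _ _) (pow_nonneg' p0 h0 _ _ _)) (Finset.mem_univ _)

/-! Transient mass and its decay -/

def trm (ξ : St N) (t : ℕ) : ℝ := ∑ y, if Transient y then ((P)^t) ξ y else 0

include h0 in
lemma trm_nonneg (ξ : St N) (t : ℕ) : 0 ≤ trm p0 ξ t :=
  Finset.sum_nonneg fun y _ => by split <;> simp [pow_nonneg' p0 h0]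

include h0 h1 in
lemma trm_le_one (ξ : St N) (t : ℕ) : trm p0 ξ t ≤ 1 := by
  rw [← pow_row_sum p0 h1 t ξ]
  exact Finset.sum_le_sum fun y _ => by split <;> simp [pow_nonneg' p0 h0]

section Decay
variable (m : ℕ) (c : ℝ)
variable (habs : ∀ x : St N, ∃ y, ¬Transient y ∧ c ≤ ((tmat (fun _ : St N => p0))^m) x y)

include h0 h1 habs in
lemma c_le_one : c ≤ 1 := by
  obtain ⟨y, _, hc⟩ := habs (stA N)
  calc c ≤ ((P)^m) (stA N) y := hc
    _ ≤ ∑ z, ((P)^m) (stA N) z :=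
        Finset.single_le_sum (fun z _ => pow_nonneg' p0 h0 m _ z) (Finset.mem_univ y)
    _ = 1 := pow_row_sum p0 h1 m _

include h0 h1 habs in
lemma mass_bound (x : St N) :
    (∑ y, if Transient y then ((P)^m) x y else 0) ≤ (1 - c) * (if Transient x then 1 else 0) := by
  by_cases hx : Transient x
  · simp only [hx, if_pos, mul_one]
    obtain ⟨y0, hy0, hc⟩ := habs x
    have key : (∑ y, if Transient y then ((P)^m) x y else 0) + ((P)^m) x y0
        ≤ ∑ y, ((P)^m) x y := by
      have h2 : (∑ y, if y = y0 then ((P)^m) x y else 0) = ((P)^m) x y0 := by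
        rw [Finset.sum_ite_eq' Finset.univ y0 (fun y => ((P)^m) x y)]; simp
      rw [← h2, ← Finset.sum_add_distrib]
      refine Finset.sum_le_sum fun y _ => ?_
      by_cases ht : Transient y <;> by_cases hy : y = y0 <;>
        simp_all [pow_nonneg' p0 h0 m x y]
    rw [pow_row_sum p0 h1 m x] at key
    linarith
  · simp only [hx, if_neg, not_false_iff, mul_zero]
    have hz : ∀ y, (if Transient y then ((P)^m) x y else 0) = 0 := by
      intro y
      split
      · rename_i ht
        rw [pow_fix p0 h1 (nontrans_fix hx) m y, if_neg (fun (h : x = y) => hx (h ▸ ht))]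
      · rfl
    simp only [hz, Finset.sum_const_zero, le_refl]

include h0 h1 habs in
lemma trm_decay (ξ : St N) (t : ℕ) : trm p0 ξ (t + m) ≤ (1 - c) * trm p0 ξ t := by
  have expand : trm p0 ξ (t + m)
      = ∑ x, ((P)^t) ξ x * ∑ y, (if Transient y then ((P)^m) x y else 0) := by
    unfold trm
    rw [pow_add]
    simp only [Matrix.mul_apply]
    have h2 : ∀ y : St N, (if Transient y then (∑ x, ((P)^t) ξ x * ((P)^m) x y) else 0)
        = ∑ x, if Transient y then ((P)^t) ξ x * ((P)^m) x y else 0 := by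
      intro y; split <;> simp
    rw [Finset.sum_congr rfl fun y _ => h2 y, Finset.sum_comm]
    refine Finset.sum_congr rfl fun x _ => ?_
    rw [Finset.mul_sum]
    refine Finset.sum_congr rfl fun y _ => ?_
    split <;> simp
  rw [expand]
  have step : ∀ x, ((P)^t) ξ x * ∑ y, (if Transient y then ((P)^m) x y else 0)
      ≤ ((P)^t) ξ x * ((1 - c) * (if Transient x then 1 else 0)) := fun x =>
    mul_le_mul_of_nonneg_left (mass_bound p0 h0 h1 m c habs x) (pow_nonneg' p0 h0 t ξ x)
  calc ∑ x, ((P)^t) ξ x * ∑ y, (if Transient y then ((P)^m) x y else 0)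
      ≤ ∑ x, ((P)^t) ξ x * ((1 - c) * (if Transient x then 1 else 0)) :=
        Finset.sum_le_sum fun x _ => step x
    _ = (1 - c) * trm p0 ξ t := by
        unfold trm
        rw [Finset.mul_sum]
        refine Finset.sum_congr rfl fun x _ => ?_
        split <;> ring

include h0 h1 habs in
lemma trm_block (ξ : St N) : ∀ (n j : ℕ), trm p0 ξ (j + n * m) ≤ (1 - c)^n := by
  have hc1 : c ≤ 1 := c_le_one p0 h0 h1 m c habs
  intro n
  induction n with
  | zero => intro j; simpa using trm_le_one p0 h0 h1 ξ j
  | succ n ih =>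
    intro j
    have he : j + (n+1) * m = (j + n * m) + m := by ring
    rw [he, pow_succ]
    calc trm p0 ξ ((j + n*m) + m) ≤ (1 - c) * trm p0 ξ (j + n*m) :=
          trm_decay p0 h0 h1 m c habs ξ _
      _ ≤ (1 - c) * (1 - c)^n :=
          mul_le_mul_of_nonneg_left (ih j) (by linarith)
      _ = (1 - c)^n * (1 - c) := by ring

include h0 h1 habs in
lemma trm_summable (hm : 1 ≤ m) (hc0 : 0 < c) (ξ : St N) : Summable (trm p0 ξ) := by
  have hc1 : c ≤ 1 := c_le_one p0 h0 h1 m c habs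
  have hr0 : (0:ℝ) ≤ 1 - c := by linarith
  have hr1 : 1 - c < 1 := by linarith
  refine summable_of_sum_range_le (c := c⁻¹ * m) (trm_nonneg p0 h0 ξ) fun n => ?_
  have hsub : ∑ t ∈ Finset.range n, trm p0 ξ t ≤ ∑ t ∈ Finset.range (n * m), trm p0 ξ t := by
    refine Finset.sum_le_sum_of_subset_of_nonneg ?_ (fun t _ _ => trm_nonneg p0 h0 ξ t)
    exact Finset.range_subset_range.2 (Nat.le_mul_of_pos_right n hm)
  have hblocks : ∀ n : ℕ, ∑ t ∈ Finset.range (n * m), trm p0 ξ t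
      ≤ (∑ q ∈ Finset.range n, (1 - c)^q) * m := by
    intro n
    induction n with
    | zero => simp
    | succ n ih =>
      have he : (n+1) * m = n * m + m := by ring
      rw [he, Finset.sum_range_add, Finset.sum_range_succ, add_mul]
      have hblk : ∑ j ∈ Finset.range m, trm p0 ξ (n * m + j) ≤ (1 - c)^n * m := by
        calc ∑ j ∈ Finset.range m, trm p0 ξ (n * m + j)
            ≤ ∑ _j ∈ Finset.range m, (1 - c)^n := Finset.sum_le_sum fun j _ => by
              rw [add_comm]; exact trm_block p0 h0 h1 m c habs ξ n j
          _ = (1 - c)^n * m := by simp [mul_comm]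
      linarith
  have hgeom : (∑ q ∈ Finset.range n, (1 - c)^q) ≤ c⁻¹ := by
    have hs : Summable (fun q : ℕ => (1 - c)^q) := summable_geometric_of_lt_one hr0 hr1
    calc (∑ q ∈ Finset.range n, (1 - c)^q) ≤ ∑' q : ℕ, (1 - c)^q :=
          Summable.sum_le_tsum _ (fun q _ => pow_nonneg hr0 q) hs
      _ = (1 - (1 - c))⁻¹ := tsum_geometric_of_lt_one hr0 hr1
      _ = c⁻¹ := by ring_nf
  calc ∑ t ∈ Finset.range n, trm p0 ξ t ≤ (∑ q ∈ Finset.range n, (1 - c)^q) * m :=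
        le_trans hsub (hblocks n)
    _ ≤ c⁻¹ * m := by
        have hm' : (0:ℝ) ≤ (m:ℝ) := Nat.cast_nonneg m
        exact mul_le_mul_of_nonneg_right hgeom hm'

include h0 h1 habs in
lemma obs_summable (hm : 1 ≤ m) (hc0 : 0 < c) (ξ : St N) (φ : St N → ℝ)
    (hφ : ∀ y, ¬Transient y → φ y = 0) :
    Summable (fun t => ∑ x, ((P)^t) ξ x * φ x) := by
  set B := ∑ z, |φ z| with hB
  have hBnn : ∀ x : St N, |φ x| ≤ B :=
    fun x => Finset.single_le_sum (f := fun z => |φ z|) (fun z _ => abs_nonneg _) (Finset.mem_univ x)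
  have hbound : ∀ t, |∑ x, ((P)^t) ξ x * φ x| ≤ trm p0 ξ t * B := by
    intro t
    calc |∑ x, ((P)^t) ξ x * φ x| ≤ ∑ x, |((P)^t) ξ x * φ x| :=
          Finset.abs_sum_le_sum_abs _ _
      _ ≤ ∑ x, (if Transient x then ((P)^t) ξ x else 0) * B := by
          refine Finset.sum_le_sum fun x _ => ?_
          by_cases hx : Transient x
          · rw [if_pos hx, abs_mul, abs_of_nonneg (pow_nonneg' p0 h0 t ξ x)]
            exact mul_le_mul_of_nonneg_left (hBnn x) (pow_nonneg' p0 h0 t ξ x)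
          · rw [if_neg hx, hφ x hx, zero_mul]; simp
      _ = trm p0 ξ t * B := by rw [← Finset.sum_mul]; rfl
  have hsum : Summable (fun t => trm p0 ξ t * B) :=
    (trm_summable p0 h0 h1 m c habs hm hc0 ξ).mul_right B
  exact (Summable.of_nonneg_of_le (fun t => abs_nonneg _) hbound hsum).of_abs

end Decay

end AuxMatrix

section AuxMart

variable {N : ℕ} (p0 : Event N → ℝ)

lemma prodI_eq (x : St N) (J : Finset (Fin N)) :
    prodI x J = if (∀ j ∈ J, x j = true) then 1 else 0 := by
  unfold prodI
  by_cases h : ∀ j ∈ J, x j = true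
  · rw [if_pos h]
    exact Finset.prod_eq_one fun j hj => by simp [bv, h j hj]
  · rw [if_neg h]
    push_neg at h
    obtain ⟨j, hj, hxj⟩ := h
    exact Finset.prod_eq_zero hj (by simp [bv, hxj])

lemma prodI_upd (e : Event N) (x : St N) (I : Finset (Fin N)) :
    prodI (upd e x) I = prodI x (I.image (extMap e)) := by
  rw [prodI_eq, prodI_eq]
  congr 1
  simp only [eq_iff_iff]
  constructor
  · intro h j hj
    obtain ⟨a, ha, rfl⟩ := Finset.mem_image.1 hj
    exact h a ha
  · intro h a ha
    exact h _ (Finset.mem_image_of_mem _ ha)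

lemma hatx_nontrans {π : Fin N → ℝ} (hπ1 : ∑ i, π i = 1) {y : St N} (hy : ¬Transient y)
    {I : Finset (Fin N)} (hI : I.Nonempty) : hatx π y - prodI y I = 0 := by
  rcases not_and_or.1 hy with hA | hB
  · rw [not_ne_iff.1 hA]
    unfold hatx
    rw [prodI_eq]
    simp [stA, bv, hπ1]
  · rw [not_ne_iff.1 hB]
    unfold hatx
    rw [prodI_eq]
    obtain ⟨j, hj⟩ := hI
    have : ¬ (∀ i ∈ I, stB N i = true) := fun h => by simpa [stB] using h j hj
    simp [stB, bv, this]
    exact ⟨j, hj⟩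

lemma marg_split (x : St N) (j : Fin N) :
    ∑ e : Event N, p0 e * bv (x (extMap e j))
      = (∑ i, emarg p0 i j * bv (x i)) + (1 - ∑ i, emarg p0 i j) * bv (x j)
      + (∑ e : Event N, p0 e - 1) * bv (x j) := by
  have hA : ∀ e : Event N, p0 e * bv (x (extMap e j))
      = (if j ∈ e.1 then p0 e * bv (x (e.2 j)) else 0)
        + (if j ∈ e.1 then 0 else p0 e * bv (x j)) := by
    intro e; unfold extMap; split <;> simp
  have hB : ∀ e : Event N, (if j ∈ e.1 then p0 e * bv (x (e.2 j)) else 0)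
      = ∑ i, if j ∈ e.1 ∧ e.2 j = i then p0 e * bv (x i) else 0 := by
    intro e
    by_cases h : j ∈ e.1
    · simp only [h, true_and, if_pos]
      rw [Finset.sum_ite_eq Finset.univ (e.2 j) (fun i => p0 e * bv (x i))]
      simp
    · simp [h]
  have step1 : ∑ e : Event N, p0 e * bv (x (extMap e j))
      = (∑ e : Event N, ∑ i, if j ∈ e.1 ∧ e.2 j = i then p0 e * bv (x i) else 0)
        + ∑ e : Event N, (if j ∈ e.1 then 0 else p0 e * bv (x j)) := by
    rw [← Finset.sum_add_distrib]
    exact Finset.sum_congr rfl fun e _ => by rw [hA e, hB e]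
  rw [step1]
  have t1 : (∑ e : Event N, ∑ i, if j ∈ e.1 ∧ e.2 j = i then p0 e * bv (x i) else 0)
      = ∑ i, emarg p0 i j * bv (x i) := by
    rw [Finset.sum_comm]
    refine Finset.sum_congr rfl fun i _ => ?_
    unfold emarg
    rw [Finset.sum_mul]
    refine Finset.sum_congr rfl fun e _ => ?_
    split <;> simp
  have t2 : (∑ e : Event N, (if j ∈ e.1 then 0 else p0 e * bv (x j)))
      = (∑ e : Event N, p0 e - ∑ i, emarg p0 i j) * bv (x j) := by
    have hm : (∑ i, emarg p0 i j) = ∑ e : Event N, if j ∈ e.1 then p0 e else 0 := by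
      unfold emarg
      rw [Finset.sum_comm]
      refine Finset.sum_congr rfl fun e _ => ?_
      by_cases h : j ∈ e.1
      · simp only [h, true_and, if_pos]
        rw [Finset.sum_ite_eq Finset.univ (e.2 j) (fun _ => p0 e)]
        simp
      · simp [h]
    rw [hm, sub_mul, Finset.sum_mul, Finset.sum_mul, ← Finset.sum_sub_distrib]
    refine Finset.sum_congr rfl fun e _ => ?_
    split <;> ring
  rw [t1, t2]
  ring

lemma hatx_step {π : Fin N → ℝ} (h1 : ∑ e : Event N, p0 e = 1) (hπ : IsRV p0 π) (x : St N) :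
    ∑ e : Event N, p0 e * hatx π (upd e x) = hatx π x := by
  have expand : ∑ e : Event N, p0 e * hatx π (upd e x)
      = ∑ j, π j * ∑ e : Event N, p0 e * bv (x (extMap e j)) := by
    unfold hatx upd
    simp only [Finset.mul_sum]
    rw [Finset.sum_comm]
    refine Finset.sum_congr rfl fun j _ => Finset.sum_congr rfl fun e _ => by ring
  have cancel : ∑ j, π j * ∑ i, emarg p0 i j * bv (x i)
      = ∑ j, π j * ((∑ i, emarg p0 i j) * bv (x j)) := by
    have l1 : ∑ j, π j * ∑ i, emarg p0 i j * bv (x i)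
        = ∑ i, (∑ j, emarg p0 i j * π j) * bv (x i) := by
      simp only [Finset.mul_sum, Finset.sum_mul]
      rw [Finset.sum_comm]
      exact Finset.sum_congr rfl fun i _ => Finset.sum_congr rfl fun j _ => by ring
    have l2 : ∑ j, π j * ((∑ i, emarg p0 i j) * bv (x j))
        = ∑ j, (∑ i, emarg p0 i j * π j) * bv (x j) := by
      refine Finset.sum_congr rfl fun j _ => ?_
      rw [Finset.sum_mul, Finset.sum_mul, Finset.mul_sum]
      exact Finset.sum_congr rfl fun i _ => by ring
    rw [l1, l2]
    simp only [hπ.1]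
  calc ∑ e : Event N, p0 e * hatx π (upd e x)
      = ∑ j, ((π j * ∑ i, emarg p0 i j * bv (x i))
          - π j * ((∑ i, emarg p0 i j) * bv (x j)) + π j * bv (x j)) := by
        rw [expand]
        refine Finset.sum_congr rfl fun j _ => ?_
        rw [marg_split p0 x j, h1]
        ring
    _ = (∑ j, π j * ∑ i, emarg p0 i j * bv (x i))
          - (∑ j, π j * ((∑ i, emarg p0 i j) * bv (x j))) + ∑ j, π j * bv (x j) := by
        rw [Finset.sum_add_distrib, Finset.sum_sub_distrib]
    _ = hatx π x := by rw [cancel]; unfold hatx; ring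

end AuxMart


lemma max_principle {N : ℕ} (p0 : Event N → ℝ) (h0 : ∀ e : Event N, 0 ≤ p0 e)
    (h1 : ∑ e : Event N, p0 e = 1)
    (i : Fin N) (m : ℕ) (ev : Fin m → Event N)
    (hpos : ∀ k, 0 < p0 (ev k))
    (hcomp : ∀ j, (List.ofFn fun k => extMap (ev k)).foldr (· ∘ ·) id j = i)
    (D : ℕ) (δ : Finset (Fin N) → ℝ)
    (hrec : ∀ I : Finset (Fin N), 1 ≤ I.card → I.card ≤ D+1 →
      δ I = ∑ e : Event N, p0 e * δ (I.image (extMap e))) :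
    ∀ I : Finset (Fin N), 1 ≤ I.card → I.card ≤ D+1 → δ I ≤ δ {i} := by
  classical
  set C : Finset (Finset (Fin N)) :=
    Finset.univ.filter (fun I => 1 ≤ I.card ∧ I.card ≤ D+1) with hC
  have hCmem : ∀ I : Finset (Fin N), I ∈ C ↔ (1 ≤ I.card ∧ I.card ≤ D+1) := by
    intro I; simp [hC]
  have hCne : C.Nonempty := ⟨{i}, (hCmem _).2 (by simp)⟩
  obtain ⟨Imax, hImaxC, hmax⟩ := C.exists_max_image δ hCne
  set M := δ Imax with hM
  have step : ∀ I, I ∈ C → δ I = M → ∀ e : Event N, 0 < p0 e →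
      (I.image (extMap e) ∈ C ∧ δ (I.image (extMap e)) = M) := by
    intro I hI hIM e he
    have hI' := (hCmem I).1 hI
    have himgC : ∀ e' : Event N, I.image (extMap e') ∈ C := by
      intro e'
      rw [hCmem]
      constructor
      · rw [Finset.one_le_card]
        exact (Finset.one_le_card.1 hI'.1).image _
      · exact le_trans Finset.card_image_le hI'.2
    refine ⟨himgC e, ?_⟩
    have hr := hrec I hI'.1 hI'.2
    have hzero : ∑ e' : Event N, p0 e' * (M - δ (I.image (extMap e'))) = 0 := by
      have hM1 : ∑ e' : Event N, p0 e' * M = M := by rw [← Finset.sum_mul, h1, one_mul]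
      calc ∑ e' : Event N, p0 e' * (M - δ (I.image (extMap e')))
          = ∑ e' : Event N, (p0 e' * M - p0 e' * δ (I.image (extMap e'))) :=
            Finset.sum_congr rfl fun e' _ => by ring
        _ = (∑ e' : Event N, p0 e' * M) - ∑ e' : Event N, p0 e' * δ (I.image (extMap e')) :=
            Finset.sum_sub_distrib _ _
        _ = M - δ I := by rw [hM1, ← hr]
        _ = 0 := by rw [hIM]; ring
    have hterm := (Finset.sum_eq_zero_iff_of_nonneg (fun e' _ =>
      mul_nonneg (h0 e') (sub_nonneg.2 (hmax _ (himgC e'))))).1 hzero e (Finset.mem_univ e)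
    rcases mul_eq_zero.1 hterm with hc | hc
    · exact absurd hc (ne_of_gt he)
    · linarith [sub_eq_zero.1 hc]
  have chain : ∀ (L : List (Event N)), (∀ e ∈ L, 0 < p0 e) → ∀ I, I ∈ C → δ I = M →
      (I.image ((L.map extMap).foldr (· ∘ ·) id) ∈ C ∧
       δ (I.image ((L.map extMap).foldr (· ∘ ·) id)) = M) := by
    intro L
    induction L with
    | nil =>
      intro _ I hI hIM
      simpa [Finset.image_id] using And.intro hI hIM
    | cons e L ih =>
      intro hL I hI hIM
      have hres := ih (fun e' he' => hL e' (List.mem_cons_of_mem e he')) I hI hIM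
      have himg : I.image (((e :: L).map extMap).foldr (· ∘ ·) id)
          = (I.image ((L.map extMap).foldr (· ∘ ·) id)).image (extMap e) := by
        rw [List.map_cons, List.foldr_cons, Finset.image_image]
      rw [himg]
      exact step _ hres.1 hres.2 e (hL e List.mem_cons_self)
  have hLpos : ∀ e ∈ List.ofFn ev, 0 < p0 e := by
    intro e he
    obtain ⟨k, rfl⟩ := List.mem_ofFn.1 he
    exact hpos k
  have hres := chain (List.ofFn ev) hLpos Imax hImaxC rfl
  have hmapof : (List.ofFn ev).map extMap = List.ofFn (fun k => extMap (ev k)) :=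
    List.map_ofFn
  obtain ⟨j0, hj0⟩ := Finset.one_le_card.1 ((hCmem Imax).1 hImaxC).1
  have hsingleton : Imax.image (((List.ofFn ev).map extMap).foldr (· ∘ ·) id) = {i} := by
    ext j
    simp only [Finset.mem_image, Finset.mem_singleton]
    constructor
    · rintro ⟨a, _, rfl⟩
      rw [hmapof]
      exact hcomp a
    · rintro rfl
      exact ⟨j0, hj0, by rw [hmapof]; exact hcomp j0⟩
  rw [hsingleton] at hres
  intro I h1c h2c
  rw [hres.2]
  exact hmax I ((hCmem I).2 ⟨h1c, h2c⟩)



set_option maxHeartbeats 2000000 in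
/-- the system `η_I = ξ̂ − ξ_I + Σ_{(R,α)} p°_{(R,α)} η_{α̃(I)}`
(for `1 ≤ |I| ≤ D+1`) with normalization `Σ_i π_i η_{{i}} = 0` is solved by
`η_I = ⟨x̂ − x_I⟩°_ξ`, and this solution is unique. -/
theorem statement6 {N : ℕ} (p0 : Event N → ℝ) (hp0 : IsDist p0)
    (hfix : FixAxiom fun _ : St N => p0)
    (π : Fin N → ℝ) (hπ : IsRV p0 π)
    (ξ : St N) (hξ : Transient ξ) (D : ℕ) :
    EtaSystem p0 π (fun I => hatx π ξ - prodI ξ I) D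
      (fun I => sgen (fun _ => p0) ξ (fun x => hatx π x - prodI x I)) ∧
    (∀ η η' : Finset (Fin N) → ℝ,
      EtaSystem p0 π (fun I => hatx π ξ - prodI ξ I) D η →
      EtaSystem p0 π (fun I => hatx π ξ - prodI ξ I) D η' →
      ∀ I : Finset (Fin N), 1 ≤ I.card → I.card ≤ D + 1 → η I = η' I) := by
  classical
  obtain ⟨hp0nn, hp0sum⟩ := hp0
  obtain ⟨i, m, ev, hm, hpos, -, hcomp⟩ := hfix
  have hpos' : ∀ k, 0 < p0 (ev k) := fun k => hpos k ξ
  -- consequences of the Fixation Axiom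
  set L := List.ofFn ev with hL
  have hlen : L.length = m := List.length_ofFn
  set c := (L.map p0).prod with hcdef
  have hc0 : 0 < c := by
    refine List.prod_pos ?_
    intro a ha
    obtain ⟨e, he, rfl⟩ := List.mem_map.1 ha
    obtain ⟨k, rfl⟩ := List.mem_ofFn.1 he
    exact hpos' k
  have hconst : ∀ x : St N, updL L x = fun _ => x i := by
    intro x
    rw [updL_eq]
    funext j
    have hmo : (L.map extMap).foldr (· ∘ ·) id j = i := by
      rw [hL, List.map_ofFn]
      exact hcomp j
    rw [hmo]
  have hnt : ∀ x : St N, ¬ Transient (fun _ : Fin N => x i) := by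
    intro x h
    cases hxi : x i with
    | false => exact h.2 (funext fun j => by simp [stB, hxi])
    | true => exact h.1 (funext fun j => by simp [stA, hxi])
  have habs : ∀ x : St N, ∃ y, ¬Transient y ∧ c ≤ ((tmat (fun _ : St N => p0))^m) x y := by
    intro x
    refine ⟨fun _ => x i, hnt x, ?_⟩
    have hpl := path_lb p0 hp0nn L x
    rw [hlen, hconst x] at hpl
    exact hpl
  -- summability of all observables appearing below
  have hsummI : ∀ J : Finset (Fin N), J.Nonempty →
      Summable (fun t => ∑ x, ((tmat (fun _ : St N => p0))^t) ξ x * (hatx π x - prodI x J)) := by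
    intro J hJ
    exact obs_summable p0 hp0nn hp0sum m c habs hm hc0 ξ _
      (fun y hy => hatx_nontrans hπ.2 hy hJ)
  constructor
  · constructor
    · -- the recurrence for the explicit solution
      intro I hc1 hc2
      have hIne : I.Nonempty := Finset.one_le_card.1 hc1
      show (∑' t : ℕ, ∑ x, ((tmat (fun _ : St N => p0))^t) ξ x * (hatx π x - prodI x I))
          = (hatx π ξ - prodI ξ I) + ∑ e : Event N, p0 e *
              ∑' t : ℕ, ∑ x, ((tmat (fun _ : St N => p0))^t) ξ x
                * (hatx π x - prodI x (I.image (extMap e)))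
      have hstep : ∀ t : ℕ,
          (∑ e : Event N, p0 e * ∑ x, ((tmat (fun _ : St N => p0))^t) ξ x
              * (hatx π x - prodI x (I.image (extMap e))))
          = ∑ x, ((tmat (fun _ : St N => p0))^(t+1)) ξ x * (hatx π x - prodI x I) := by
        intro t
        have hinner : ∀ x : St N,
            (∑ e : Event N, p0 e * (hatx π x - prodI x (I.image (extMap e))))
            = ∑ e : Event N, p0 e * (hatx π (upd e x) - prodI (upd e x) I) := by
          intro x
          have lhs1 : (∑ e : Event N, p0 e * (hatx π x - prodI x (I.image (extMap e))))
              = hatx π x - ∑ e : Event N, p0 e * prodI x (I.image (extMap e)) := by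
            calc (∑ e : Event N, p0 e * (hatx π x - prodI x (I.image (extMap e))))
                = (∑ e : Event N, p0 e * hatx π x)
                  - ∑ e : Event N, p0 e * prodI x (I.image (extMap e)) := by
                  rw [← Finset.sum_sub_distrib]
                  exact Finset.sum_congr rfl fun e _ => by ring
              _ = hatx π x - ∑ e : Event N, p0 e * prodI x (I.image (extMap e)) := by
                  rw [← Finset.sum_mul, hp0sum, one_mul]
          have rhs1 : (∑ e : Event N, p0 e * (hatx π (upd e x) - prodI (upd e x) I))
              = hatx π x - ∑ e : Event N, p0 e * prodI x (I.image (extMap e)) := by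
            calc (∑ e : Event N, p0 e * (hatx π (upd e x) - prodI (upd e x) I))
                = (∑ e : Event N, p0 e * hatx π (upd e x))
                  - ∑ e : Event N, p0 e * prodI (upd e x) I := by
                  rw [← Finset.sum_sub_distrib]
                  exact Finset.sum_congr rfl fun e _ => by ring
              _ = hatx π x - ∑ e : Event N, p0 e * prodI x (I.image (extMap e)) := by
                  rw [hatx_step p0 hp0sum hπ x]
                  congr 1
                  exact Finset.sum_congr rfl fun e _ => by rw [prodI_upd]
          rw [lhs1, rhs1]
        calc (∑ e : Event N, p0 e * ∑ x, ((tmat (fun _ : St N => p0))^t) ξ x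
                * (hatx π x - prodI x (I.image (extMap e))))
            = ∑ x, ((tmat (fun _ : St N => p0))^t) ξ x
                * ∑ e : Event N, p0 e * (hatx π x - prodI x (I.image (extMap e))) := by
              simp only [Finset.mul_sum]
              rw [Finset.sum_comm]
              exact Finset.sum_congr rfl fun x _ => Finset.sum_congr rfl fun e _ => by ring
          _ = ∑ x, ((tmat (fun _ : St N => p0))^t) ξ x
                * ∑ e : Event N, p0 e * (hatx π (upd e x) - prodI (upd e x) I) := by
              exact Finset.sum_congr rfl fun x _ => by rw [hinner x]
          _ = ∑ x, ((tmat (fun _ : St N => p0))^(t+1)) ξ x * (hatx π x - prodI x I) :=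
              (pow_succ_sum p0 t ξ (fun x => hatx π x - prodI x I)).symm
      have hs := hsummI I hIne
      have heq := Summable.tsum_eq_zero_add hs
      have h00 : (∑ x, ((tmat (fun _ : St N => p0))^0) ξ x * (hatx π x - prodI x I))
          = hatx π ξ - prodI ξ I := by
        simp only [pow_zero, Matrix.one_apply, ite_mul, one_mul, zero_mul,
          Finset.sum_ite_eq, Finset.mem_univ, if_true]
      have hshift : (∑' t : ℕ, ∑ x, ((tmat (fun _ : St N => p0))^(t+1)) ξ x
            * (hatx π x - prodI x I))
          = ∑ e : Event N, p0 e * ∑' t : ℕ, ∑ x, ((tmat (fun _ : St N => p0))^t) ξ x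
            * (hatx π x - prodI x (I.image (extMap e))) := by
        calc (∑' t : ℕ, ∑ x, ((tmat (fun _ : St N => p0))^(t+1)) ξ x * (hatx π x - prodI x I))
            = ∑' t : ℕ, ∑ e : Event N, p0 e * ∑ x, ((tmat (fun _ : St N => p0))^t) ξ x
                * (hatx π x - prodI x (I.image (extMap e))) :=
              tsum_congr fun t => (hstep t).symm
          _ = ∑ e : Event N, ∑' t : ℕ, p0 e * ∑ x, ((tmat (fun _ : St N => p0))^t) ξ x
                * (hatx π x - prodI x (I.image (extMap e))) :=
              Summable.tsum_finsetSum fun e _ => (hsummI _ (hIne.image _)).mul_left (p0 e)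
          _ = ∑ e : Event N, p0 e * ∑' t : ℕ, ∑ x, ((tmat (fun _ : St N => p0))^t) ξ x
                * (hatx π x - prodI x (I.image (extMap e))) :=
              Finset.sum_congr rfl fun e _ => tsum_mul_left
      rw [heq, h00, hshift]
    · -- the normalization for the explicit solution
      show (∑ j, π j * ∑' t : ℕ, ∑ x, ((tmat (fun _ : St N => p0))^t) ξ x
          * (hatx π x - prodI x {j})) = 0
      have hsing : ∀ j : Fin N, ({j} : Finset (Fin N)).Nonempty := fun j => ⟨j, by simp⟩
      calc (∑ j, π j * ∑' t : ℕ, ∑ x, ((tmat (fun _ : St N => p0))^t) ξ x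
            * (hatx π x - prodI x {j}))
          = ∑ j, ∑' t : ℕ, π j * ∑ x, ((tmat (fun _ : St N => p0))^t) ξ x
            * (hatx π x - prodI x {j}) :=
            Finset.sum_congr rfl fun j _ => tsum_mul_left.symm
        _ = ∑' t : ℕ, ∑ j, π j * ∑ x, ((tmat (fun _ : St N => p0))^t) ξ x
            * (hatx π x - prodI x {j}) :=
            (Summable.tsum_finsetSum fun j _ => (hsummI {j} (hsing j)).mul_left (π j)).symm
        _ = 0 := by
            have hzero : ∀ t : ℕ, (∑ j, π j * ∑ x, ((tmat (fun _ : St N => p0))^t) ξ x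
                * (hatx π x - prodI x {j})) = 0 := by
              intro t
              have hswap : (∑ j, π j * ∑ x, ((tmat (fun _ : St N => p0))^t) ξ x
                  * (hatx π x - prodI x {j}))
                  = ∑ x, ((tmat (fun _ : St N => p0))^t) ξ x
                    * ∑ j, π j * (hatx π x - prodI x {j}) := by
                simp only [Finset.mul_sum]
                rw [Finset.sum_comm]
                exact Finset.sum_congr rfl fun x _ => Finset.sum_congr rfl fun j _ => by ring
              rw [hswap]
              refine Finset.sum_eq_zero fun x _ => ?_
              have hin : (∑ j, π j * (hatx π x - prodI x {j})) = 0 := by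
                have : ∀ j, π j * (hatx π x - prodI x {j}) = π j * hatx π x - π j * bv (x j) := by
                  intro j
                  rw [prodI, Finset.prod_singleton]
                  ring
                rw [Finset.sum_congr rfl fun j _ => this j, Finset.sum_sub_distrib,
                  ← Finset.sum_mul, hπ.2, one_mul]
                rw [hatx]
                ring
              rw [hin, mul_zero]
            rw [tsum_congr hzero]
            exact tsum_zero
  · -- uniqueness
    intro η η' hη hη' I hc1 hc2
    set δ : Finset (Fin N) → ℝ := fun J => η J - η' J with hδ
    have hrecδ : ∀ J : Finset (Fin N), 1 ≤ J.card → J.card ≤ D+1 →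
        δ J = ∑ e : Event N, p0 e * δ (J.image (extMap e)) := by
      intro J h1c h2c
      calc δ J = (hatx π ξ - prodI ξ J + ∑ e : Event N, p0 e * η (J.image (extMap e)))
            - (hatx π ξ - prodI ξ J + ∑ e : Event N, p0 e * η' (J.image (extMap e))) := by
            rw [hδ]; dsimp only; rw [← hη.1 J h1c h2c, ← hη'.1 J h1c h2c]
        _ = ∑ e : Event N, (p0 e * η (J.image (extMap e)) - p0 e * η' (J.image (extMap e))) := by
            rw [Finset.sum_sub_distrib]; ring
        _ = ∑ e : Event N, p0 e * δ (J.image (extMap e)) :=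
            Finset.sum_congr rfl fun e _ => by rw [hδ]; ring
    have hrecnegδ : ∀ J : Finset (Fin N), 1 ≤ J.card → J.card ≤ D+1 →
        (fun K => -δ K) J = ∑ e : Event N, p0 e * (fun K => -δ K) (J.image (extMap e)) := by
      intro J h1c h2c
      dsimp only
      rw [hrecδ J h1c h2c, ← Finset.sum_neg_distrib]
      exact Finset.sum_congr rfl fun e _ => by ring
    have hub := max_principle p0 hp0nn hp0sum i m ev hpos' hcomp D δ hrecδ
    have hlb := max_principle p0 hp0nn hp0sum i m ev hpos' hcomp D (fun K => -δ K) hrecnegδ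
    have hconstδ : ∀ J : Finset (Fin N), 1 ≤ J.card → J.card ≤ D+1 → δ J = δ {i} := by
      intro J h1c h2c
      have h3 := hub J h1c h2c
      have h4 := hlb J h1c h2c
      linarith
    have hsingles : ∀ j : Fin N, δ {j} = δ {i} := by
      intro j
      exact hconstδ {j} (by simp) (by simp)
    have hnorm : ∑ j, π j * δ {j} = 0 := by
      have e1 := hη.2
      have e2 := hη'.2
      calc ∑ j, π j * δ {j} = ∑ j, (π j * η {j} - π j * η' {j}) :=
            Finset.sum_congr rfl fun j _ => by rw [hδ]; ring
        _ = (∑ j, π j * η {j}) - ∑ j, π j * η' {j} := Finset.sum_sub_distrib _ _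
        _ = 0 := by rw [e1, e2]; ring
    have hi0 : δ {i} = 0 := by
      have : ∑ j, π j * δ {j} = δ {i} := by
        calc ∑ j, π j * δ {j} = ∑ j, π j * δ {i} :=
              Finset.sum_congr rfl fun j _ => by rw [hsingles j]
          _ = (∑ j, π j) * δ {i} := by rw [Finset.sum_mul]
          _ = δ {i} := by rw [hπ.2, one_mul]
      linarith [hnorm, this]
    have := hconstδ I hc1 hc2
    rw [hi0] at this
    have : η I - η' I = 0 := this
    linarith

end Evo
end

section
/- The set-valued coalescent Markov chain 𝒞, whose state space is the nonempty subsets of {1,…,N} and which transitions from I to α̃(I) with probability p°_{(R,α)}, has (under the Fixation Axiom) a single closed communicating class consisting only of singleton subsets, and a unique stationary distribution concentrated on singletons, in which the stationary probability of {i} equals the reproductive value π_i. -/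
open Finset Filter Asymptotics Topology

namespace Evo

/-- Nonempty subsets of `{1,…,N}`: the states of the coalescent chain `𝒞`. -/
abbrev NES (N : ℕ) := {I : Finset (Fin N) // I.Nonempty}

/-- Transition matrix of the coalescent chain `𝒞`: from `I`, transition to `α̃(I)` with
probability `p°_{(R,α)}`. -/
def cmat {N : ℕ} (p0 : Event N → ℝ) : Matrix (NES N) (NES N) ℝ :=
  Matrix.of fun I J => ∑ e : Event N, if I.val.image (extMap e) = J.val then p0 e else 0

/-- Accessibility in the coalescent chain. -/
def leadsTo {N : ℕ} (p0 : Event N → ℝ) : NES N → NES N → Prop :=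
  Relation.ReflTransGen fun I J => 0 < cmat p0 I J

/-- A closed communicating class of the coalescent chain: a nonempty set of states that is
closed under positive-probability transitions and in which every state leads to every
other. -/
def IsCCC {N : ℕ} (p0 : Event N → ℝ) (S : Set (NES N)) : Prop :=
  S.Nonempty ∧ (∀ I ∈ S, ∀ J, 0 < cmat p0 I J → J ∈ S) ∧
  ∀ I ∈ S, ∀ J ∈ S, leadsTo p0 I J

/-- A stationary distribution of the coalescent chain. -/
def IsStatC {N : ℕ} (p0 : Event N → ℝ) (q : NES N → ℝ) : Prop :=
  (∀ I, 0 ≤ q I) ∧ (∑ I : NES N, q I = 1) ∧ ∀ J, ∑ I : NES N, q I * cmat p0 I J = q J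

section Aux

section Stoch
variable {S : Type*} [Fintype S] [DecidableEq S]

lemma pow_nonneg_of (A : Matrix S S ℝ) (h0 : ∀ I J, 0 ≤ A I J) :
    ∀ t, ∀ I J, 0 ≤ (A ^ t) I J := by
  intro t
  induction t with
  | zero => intro I J; simp [Matrix.one_apply]; split <;> norm_num
  | succ t ih =>
    intro I J
    rw [pow_succ, Matrix.mul_apply]
    exact Finset.sum_nonneg fun K _ => mul_nonneg (ih I K) (h0 K J)

lemma pow_rowsum_of (A : Matrix S S ℝ) (h1 : ∀ I, ∑ J, A I J = 1) :
    ∀ t, ∀ I, ∑ J, (A ^ t) I J = 1 := by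
  intro t
  induction t with
  | zero => intro I; simp [Matrix.one_apply]
  | succ t ih =>
    intro I
    simp only [pow_succ, Matrix.mul_apply]
    rw [Finset.sum_comm]
    calc ∑ K, ∑ J, (A ^ t) I K * A K J = ∑ K, (A ^ t) I K * ∑ J, A K J := by
          simp [Finset.mul_sum]
      _ = 1 := by simp only [h1, mul_one]; exact ih I

lemma fixed_pow (A : Matrix S S ℝ) (v : S → ℝ)
    (hv : ∀ J, ∑ I, v I * A I J = v J) :
    ∀ t J, ∑ I, v I * (A ^ t) I J = v J := by
  intro t
  induction t with
  | zero => intro J; simp [Matrix.one_apply]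
  | succ t ih =>
    intro J
    simp only [pow_succ, Matrix.mul_apply, Finset.mul_sum]
    rw [Finset.sum_comm]
    calc ∑ K, ∑ I, v I * ((A ^ t) I K * A K J)
        = ∑ K, (∑ I, v I * (A ^ t) I K) * A K J := by
          simp [Finset.sum_mul, mul_assoc]
      _ = ∑ K, v K * A K J := by simp only [ih]
      _ = v J := hv J

lemma doeblin_contraction (A : Matrix S S ℝ) (h0 : ∀ I J, 0 ≤ A I J)
    (h1 : ∀ I, ∑ J, A I J = 1) (c : S) (δ : ℝ) (hδ : ∀ I, δ ≤ A I c)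
    (v : S → ℝ) (hv : ∑ I, v I = 0) :
    ∑ J, |∑ I, v I * A I J| ≤ (1 - δ) * ∑ I, |v I| := by
  have key : ∀ J, |∑ I, v I * A I J| ≤ ∑ I, |v I| * (A I J - if J = c then δ else 0) := by
    intro J
    have h2 : ∑ I, v I * A I J = ∑ I, v I * (A I J - if J = c then δ else 0) := by
      simp only [mul_sub, Finset.sum_sub_distrib]
      have : ∑ I, v I * (if J = c then δ else 0) = (∑ I, v I) * (if J = c then δ else 0) := by
        rw [Finset.sum_mul]
      rw [this, hv, zero_mul, sub_zero]
    rw [h2]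
    refine (Finset.abs_sum_le_sum_abs _ _).trans ?_
    apply Finset.sum_le_sum
    intro I _
    rw [abs_mul]
    have hn : 0 ≤ A I J - if J = c then δ else 0 := by
      split
      · next h => subst h; linarith [hδ I]
      · simpa using h0 I J
    rw [abs_of_nonneg hn]
  calc ∑ J, |∑ I, v I * A I J|
      ≤ ∑ J, ∑ I, |v I| * (A I J - if J = c then δ else 0) :=
        Finset.sum_le_sum fun J _ => key J
    _ = ∑ I, |v I| * ((∑ J, A I J) - δ) := by
        rw [Finset.sum_comm]
        refine Finset.sum_congr rfl fun I _ => ?_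
        simp [← Finset.mul_sum, Finset.sum_sub_distrib, mul_sub]
    _ = (1 - δ) * ∑ I, |v I| := by
        simp only [h1]
        rw [Finset.mul_sum]
        exact Finset.sum_congr rfl fun I _ => by ring

lemma fixed_sum_zero (A : Matrix S S ℝ) (h0 : ∀ I J, 0 ≤ A I J)
    (h1 : ∀ I, ∑ J, A I J = 1) (m : ℕ) (c : S) (δ : ℝ) (hδpos : 0 < δ)
    (hδ : ∀ I, δ ≤ (A ^ m) I c)
    (v : S → ℝ) (hfix : ∀ J, ∑ I, v I * A I J = v J) (hv : ∑ I, v I = 0) :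
    v = 0 := by
  have hcon := doeblin_contraction (A ^ m) (pow_nonneg_of A h0 m) (pow_rowsum_of A h1 m)
    c δ hδ v hv
  have hfixm := fixed_pow A v hfix m
  simp only [hfixm] at hcon
  have hL : 0 ≤ ∑ I, |v I| := Finset.sum_nonneg fun I _ => abs_nonneg _
  have hz : ∑ I, |v I| = 0 := by nlinarith
  funext I
  have := (Finset.sum_eq_zero_iff_of_nonneg (fun I _ => abs_nonneg (v I))).mp hz I (mem_univ I)
  simpa [abs_eq_zero] using this

lemma abs_fixed (A : Matrix S S ℝ) (h0 : ∀ I J, 0 ≤ A I J)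
    (h1 : ∀ I, ∑ J, A I J = 1)
    (v : S → ℝ) (hfix : ∀ J, ∑ I, v I * A I J = v J) :
    ∀ J, ∑ I, |v I| * A I J = |v J| := by
  have hle : ∀ J, |v J| ≤ ∑ I, |v I| * A I J := by
    intro J
    rw [← hfix J]
    refine (Finset.abs_sum_le_sum_abs _ _).trans ?_
    refine Finset.sum_le_sum fun I _ => ?_
    rw [abs_mul, abs_of_nonneg (h0 I J)]
  have hsum : ∑ J, ∑ I, |v I| * A I J = ∑ J, |v J| := by
    rw [Finset.sum_comm]
    calc ∑ I, ∑ J, |v I| * A I J = ∑ I, |v I| * ∑ J, A I J := by simp [Finset.mul_sum]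
      _ = ∑ I, |v I| := by simp [h1]
  intro J
  exact ((Finset.sum_eq_sum_iff_of_le fun J _ => hle J).mp hsum.symm J (mem_univ J)).symm

lemma exists_stationary [Nonempty S] (A : Matrix S S ℝ) (h0 : ∀ I J, 0 ≤ A I J)
    (h1 : ∀ I, ∑ J, A I J = 1) :
    ∃ q : S → ℝ, (∀ I, 0 ≤ q I) ∧ (∑ I, q I = 1) ∧ ∀ J, ∑ I, q I * A I J = q J := by
  have hdet : (A - 1).det = 0 := by
    rw [← Matrix.exists_mulVec_eq_zero_iff]
    refine ⟨fun _ => 1, ?_, ?_⟩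
    · intro h
      have := congrFun h (Classical.arbitrary S)
      simpa using this
    · funext I
      simp [Matrix.sub_mulVec, Matrix.mulVec, dotProduct, h1 I, Matrix.one_apply]
  have hdetT : ((A - 1).transpose).det = 0 := by rw [Matrix.det_transpose]; exact hdet
  obtain ⟨v, hv0, hveq⟩ := (Matrix.exists_mulVec_eq_zero_iff).mpr hdetT
  have hfix : ∀ J, ∑ I, v I * A I J = v J := by
    intro J
    have h2 := congrFun hveq J
    simp only [Matrix.mulVec, dotProduct, Matrix.transpose_apply, Matrix.sub_apply,
      Matrix.one_apply, Pi.zero_apply, sub_mul, Finset.sum_sub_distrib, sub_eq_zero,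
      ite_mul, one_mul, zero_mul, Finset.sum_ite_eq] at h2
    calc ∑ I, v I * A I J = ∑ I, A I J * v I :=
          Finset.sum_congr rfl fun I _ => mul_comm _ _
      _ = v J := by simpa using h2
  have habs := abs_fixed A h0 h1 v hfix
  set s := ∑ I, |v I| with hs
  have hspos : 0 < s := by
    rcases Function.ne_iff.mp hv0 with ⟨I, hI⟩
    have h3 : 0 < |v I| := abs_pos.mpr (by simpa using hI)
    exact lt_of_lt_of_le h3
      (Finset.single_le_sum (f := fun I => |v I|) (fun J _ => abs_nonneg _) (mem_univ I))
  refine ⟨fun I => s⁻¹ * |v I|, fun I => by positivity, ?_, ?_⟩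
  · rw [← Finset.mul_sum, ← hs, inv_mul_cancel₀ hspos.ne']
  · intro J
    have : ∑ I, s⁻¹ * |v I| * A I J = s⁻¹ * ∑ I, |v I| * A I J := by
      rw [Finset.mul_sum]; exact Finset.sum_congr rfl fun I _ => by ring
    rw [this, habs J]

end Stoch
end Aux

section Aux2
variable {N : ℕ}

/-- The composite map of a list of events (first applied = last element). -/
def evF (es : List (Event N)) : Fin N → Fin N := (es.map extMap).foldr (· ∘ ·) id

@[simp] lemma evF_nil : evF ([] : List (Event N)) = id := rfl

@[simp] lemma evF_cons (e : Event N) (es : List (Event N)) :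
    evF (e :: es) = extMap e ∘ evF es := rfl

lemma cmat_nonneg (p0 : Event N → ℝ) (hp0 : IsDist p0) (I J : NES N) :
    0 ≤ cmat p0 I J := by
  refine Finset.sum_nonneg fun e _ => ?_
  split
  · exact hp0.1 e
  · exact le_rfl

lemma cmat_rowsum (p0 : Event N → ℝ) (hp0 : IsDist p0) (I : NES N) :
    ∑ J, cmat p0 I J = 1 := by
  simp only [cmat, Matrix.of_apply]
  rw [Finset.sum_comm]
  have h : ∀ e : Event N,
      (∑ J : NES N, if I.val.image (extMap e) = J.val then p0 e else 0) = p0 e := by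
    intro e
    have hJ0 : (⟨I.val.image (extMap e), I.prop.image _⟩ : NES N) ∈ (univ : Finset (NES N)) :=
      mem_univ _
    calc (∑ J : NES N, if I.val.image (extMap e) = J.val then p0 e else 0)
        = ∑ J : NES N, if (⟨I.val.image (extMap e), I.prop.image _⟩ : NES N) = J
            then p0 e else 0 := by
          refine Finset.sum_congr rfl fun J _ => ?_
          congr 1
          simp [Subtype.ext_iff]
      _ = p0 e := by rw [Finset.sum_ite_eq]; simp
  simp only [h]
  exact hp0.2

lemma cmat_step (p0 : Event N → ℝ) (hp0 : IsDist p0) (e : Event N) (K J : NES N)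
    (hJ : J.val = K.val.image (extMap e)) : p0 e ≤ cmat p0 K J := by
  have : cmat p0 K J = ∑ e' : Event N, if K.val.image (extMap e') = J.val then p0 e' else 0 := rfl
  rw [this]
  have he : (if K.val.image (extMap e) = J.val then p0 e else 0) = p0 e := by
    rw [if_pos hJ.symm]
  calc p0 e = if K.val.image (extMap e) = J.val then p0 e else 0 := he.symm
    _ ≤ ∑ e' : Event N, if K.val.image (extMap e') = J.val then p0 e' else 0 := by
        refine Finset.single_le_sum (f := fun e' => if K.val.image (extMap e') = J.val then p0 e' else 0) (fun e' _ => ?_) (mem_univ e)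
        split
        · exact hp0.1 e'
        · exact le_rfl

lemma foldr_nonneg (p0 : Event N → ℝ) (hp0 : IsDist p0) (es : List (Event N)) :
    0 ≤ es.foldr (fun e r => p0 e * r) 1 := by
  induction es with
  | nil => norm_num
  | cons e es ih => exact mul_nonneg (hp0.1 e) ih

lemma cmat_path (p0 : Event N → ℝ) (hp0 : IsDist p0) :
    ∀ (es : List (Event N)) (I : NES N),
      es.foldr (fun e r => p0 e * r) 1 ≤
        (cmat p0 ^ es.length) I ⟨I.val.image (evF es), I.prop.image _⟩ := by
  intro es
  induction es with
  | nil =>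
    intro I
    have hI : (⟨I.val.image (evF []), I.prop.image _⟩ : NES N) = I := by
      simp [Subtype.ext_iff, Finset.image_id]
    rw [hI]
    simp [Matrix.one_apply]
  | cons e es ih =>
    intro I
    have hlen : (e :: es).length = es.length + 1 := rfl
    rw [hlen, pow_succ, Matrix.mul_apply]
    set K : NES N := ⟨I.val.image (evF es), I.prop.image _⟩ with hK
    set J : NES N := ⟨I.val.image (evF (e :: es)), I.prop.image _⟩ with hJdef
    have hJ : J.val = K.val.image (extMap e) := by
      simp [hJdef, hK, evF_cons, Finset.image_image]
    have hstep := cmat_step p0 hp0 e K J hJ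
    have hterm : (cmat p0 ^ es.length) I K * cmat p0 K J
        ≤ ∑ L, (cmat p0 ^ es.length) I L * cmat p0 L J := by
      refine Finset.single_le_sum (f := fun L => (cmat p0 ^ es.length) I L * cmat p0 L J) (fun L _ => mul_nonneg ?_ ?_) (mem_univ K)
      · exact pow_nonneg_of _ (cmat_nonneg p0 hp0) _ _ _
      · exact cmat_nonneg p0 hp0 _ _
    refine le_trans ?_ hterm
    have : (e :: es).foldr (fun e r => p0 e * r) 1
        = (es.foldr (fun e r => p0 e * r) 1) * p0 e := by simp [mul_comm]
    rw [this]
    exact mul_le_mul (ih I) hstep (hp0.1 e)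
      (pow_nonneg_of _ (cmat_nonneg p0 hp0) _ _ _)

lemma foldr_pos (p0 : Event N → ℝ) (es : List (Event N)) (h : ∀ e ∈ es, 0 < p0 e) :
    0 < es.foldr (fun e r => p0 e * r) 1 := by
  induction es with
  | nil => norm_num
  | cons e es ih =>
    exact mul_pos (h e (List.mem_cons_self)) (ih fun e' he' => h e' (List.mem_cons_of_mem _ he'))

lemma cmat_doeblin (p0 : Event N → ℝ) (hp0 : IsDist p0) (m : ℕ) (ev : Fin m → Event N)
    (istar : Fin N)
    (hcomp : ∀ j, (List.ofFn fun k => extMap (ev k)).foldr (· ∘ ·) id j = istar) :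
    ∀ I : NES N, (List.ofFn ev).foldr (fun e r => p0 e * r) 1 ≤
      (cmat p0 ^ m) I ⟨{istar}, Finset.singleton_nonempty _⟩ := by
  intro I
  have hF : ∀ j, evF (List.ofFn ev) j = istar := by
    intro j
    have : (List.ofFn ev).map extMap = List.ofFn fun k => extMap (ev k) := by
      rw [List.map_ofFn]; rfl
    simp only [evF, this]
    exact hcomp j
  have himg : I.val.image (evF (List.ofFn ev)) = {istar} := by
    ext a
    simp only [Finset.mem_image, Finset.mem_singleton]
    constructor
    · rintro ⟨b, _, rfl⟩; exact hF b
    · rintro rfl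
      obtain ⟨b, hb⟩ := I.prop
      exact ⟨b, hb, hF b⟩
  have := cmat_path p0 hp0 (List.ofFn ev) I
  have hlen : (List.ofFn ev).length = m := List.length_ofFn
  have heq : (⟨I.val.image (evF (List.ofFn ev)), I.prop.image _⟩ : NES N)
      = ⟨{istar}, Finset.singleton_nonempty _⟩ := Subtype.ext himg
  rw [hlen, heq] at this
  exact this

lemma pos_pow_leadsTo (p0 : Event N → ℝ) (hp0 : IsDist p0) :
    ∀ (t : ℕ) (I J : NES N), 0 < (cmat p0 ^ t) I J → leadsTo p0 I J := by
  intro t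
  induction t with
  | zero =>
    intro I J h
    rw [pow_zero, Matrix.one_apply] at h
    split at h
    · next heq => exact heq ▸ Relation.ReflTransGen.refl
    · exact absurd h (lt_irrefl 0)
  | succ t ih =>
    intro I J h
    rw [pow_succ, Matrix.mul_apply] at h
    have : ∃ K : NES N, 0 < (cmat p0 ^ t) I K * cmat p0 K J := by
      by_contra hc
      push_neg at hc
      have : ∑ K, (cmat p0 ^ t) I K * cmat p0 K J ≤ 0 :=
        Finset.sum_nonpos fun K _ => hc K
      linarith
    obtain ⟨K, hK⟩ := this
    have h1 : 0 ≤ (cmat p0 ^ t) I K := pow_nonneg_of _ (cmat_nonneg p0 hp0) _ _ _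
    have h2 : 0 ≤ cmat p0 K J := cmat_nonneg p0 hp0 _ _
    have hK1 : 0 < (cmat p0 ^ t) I K := by nlinarith
    have hK2 : 0 < cmat p0 K J := by nlinarith
    exact Relation.ReflTransGen.tail (ih I K hK1) hK2

lemma cmat_card_step (p0 : Event N → ℝ) (I J : NES N) (h : cmat p0 I J ≠ 0)
    (hI : I.val.card = 1) : J.val.card = 1 := by
  obtain ⟨e, _, he⟩ := Finset.exists_ne_zero_of_sum_ne_zero h
  have hcond : I.val.image (extMap e) = J.val := by
    by_contra hc
    rw [if_neg hc] at he
    exact he rfl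
  obtain ⟨a, ha⟩ := Finset.card_eq_one.mp hI
  rw [← hcond, ha, Finset.image_singleton]
  exact Finset.card_singleton _

lemma leadsTo_card (p0 : Event N → ℝ) (hp0 : IsDist p0) (I J : NES N)
    (h : leadsTo p0 I J) (hI : I.val.card = 1) : J.val.card = 1 := by
  induction h with
  | refl => exact hI
  | tail _ hstep ih => exact cmat_card_step p0 _ _ (ne_of_gt hstep) ih

lemma cmat_single_ns (p0 : Event N → ℝ) (i : Fin N) (J : NES N) (hJ : J.val.card ≠ 1) :
    cmat p0 ⟨{i}, Finset.singleton_nonempty i⟩ J = 0 := by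
  refine Finset.sum_eq_zero fun e _ => ?_
  rw [if_neg]
  intro hc
  apply hJ
  rw [← hc, Finset.image_singleton]
  exact Finset.card_singleton _

lemma pow_single_ns (p0 : Event N → ℝ) (hp0 : IsDist p0) (t : ℕ) (i : Fin N) (J : NES N)
    (hJ : J.val.card ≠ 1) : (cmat p0 ^ t) ⟨{i}, Finset.singleton_nonempty i⟩ J = 0 := by
  by_contra h
  have hnn : 0 ≤ (cmat p0 ^ t) ⟨{i}, Finset.singleton_nonempty i⟩ J :=
    pow_nonneg_of _ (cmat_nonneg p0 hp0) _ _ _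
  have hpos : 0 < (cmat p0 ^ t) ⟨{i}, Finset.singleton_nonempty i⟩ J :=
    lt_of_le_of_ne hnn (Ne.symm h)
  have := leadsTo_card p0 hp0 _ _ (pos_pow_leadsTo p0 hp0 t _ _ hpos) (Finset.card_singleton i)
  exact hJ this

lemma ns_bound (p0 : Event N → ℝ) (hp0 : IsDist p0) (m : ℕ) (c : NES N)
    (hc : c.val.card = 1) (δ : ℝ) (hδ : ∀ I, δ ≤ (cmat p0 ^ m) I c) :
    ∀ (k : ℕ) (J : NES N),
      ∑ I ∈ Finset.univ.filter (fun I : NES N => I.val.card ≠ 1), (cmat p0 ^ (k * m)) J I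
        ≤ (1 - δ) ^ k := by
  have hδ1 : δ ≤ 1 := by
    refine (hδ c).trans ?_
    calc (cmat p0 ^ m) c c ≤ ∑ K, (cmat p0 ^ m) c K :=
          Finset.single_le_sum (f := fun K => (cmat p0 ^ m) c K)
            (fun K _ => pow_nonneg_of _ (cmat_nonneg p0 hp0) m c K) (mem_univ c)
      _ = 1 := pow_rowsum_of _ (cmat_rowsum p0 hp0) _ _
  intro k
  induction k with
  | zero =>
    intro J
    simp only [Nat.zero_mul, pow_zero, Matrix.one_apply]
    rw [Finset.sum_ite_eq]
    split <;> norm_num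
  | succ k ih =>
    intro J
    have hexp : (k + 1) * m = m + k * m := by ring
    rw [hexp, pow_add]
    have hswap : ∑ I ∈ Finset.univ.filter (fun I : NES N => I.val.card ≠ 1),
        (cmat p0 ^ m * cmat p0 ^ (k * m)) J I
        = ∑ K : NES N, ∑ I ∈ Finset.univ.filter (fun I : NES N => I.val.card ≠ 1),
            (cmat p0 ^ m) J K * (cmat p0 ^ (k * m)) K I := by
      simp only [Matrix.mul_apply]
      rw [Finset.sum_comm]
    rw [hswap]
    have hterm : ∀ K : NES N,
        ∑ I ∈ Finset.univ.filter (fun I : NES N => I.val.card ≠ 1),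
            (cmat p0 ^ m) J K * (cmat p0 ^ (k * m)) K I
          ≤ (cmat p0 ^ m) J K * (if K.val.card ≠ 1 then (1 - δ) ^ k else 0) := by
      intro K
      rw [← Finset.mul_sum]
      by_cases hK : K.val.card = 1
      · obtain ⟨a, ha⟩ := Finset.card_eq_one.mp hK
        have hKa : K = ⟨{a}, Finset.singleton_nonempty a⟩ := Subtype.ext ha
        have hz : ∑ I ∈ Finset.univ.filter (fun I : NES N => I.val.card ≠ 1),
            (cmat p0 ^ (k * m)) K I = 0 := by
          rw [hKa]
          exact Finset.sum_eq_zero fun I hI =>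
            pow_single_ns p0 hp0 _ a I (Finset.mem_filter.mp hI).2
        rw [hz, mul_zero]
        have hz2 : (if K.val.card ≠ 1 then (1 - δ) ^ k else 0) = 0 := by simp [hK]
        rw [hz2, mul_zero]
      · rw [if_pos hK]
        exact mul_le_mul_of_nonneg_left (ih K)
          (pow_nonneg_of _ (cmat_nonneg p0 hp0) _ _ _)
    calc ∑ K : NES N, ∑ I ∈ Finset.univ.filter (fun I : NES N => I.val.card ≠ 1),
            (cmat p0 ^ m) J K * (cmat p0 ^ (k * m)) K I
        ≤ ∑ K : NES N, (cmat p0 ^ m) J K * (if K.val.card ≠ 1 then (1 - δ) ^ k else 0) :=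
          Finset.sum_le_sum fun K _ => hterm K
      _ = (∑ K ∈ Finset.univ.filter (fun K : NES N => K.val.card ≠ 1),
            (cmat p0 ^ m) J K) * (1 - δ) ^ k := by
          rw [Finset.sum_mul, Finset.sum_filter]
          refine Finset.sum_congr rfl fun K _ => ?_
          split <;> simp
      _ ≤ (1 - δ) * (1 - δ) ^ k := by
          have hpownn : (0:ℝ) ≤ (1 - δ) ^ k := pow_nonneg (by linarith) k
          refine mul_le_mul_of_nonneg_right ?_ hpownn
          have hcF : c ∉ Finset.univ.filter (fun K : NES N => K.val.card ≠ 1) := by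
            simp [hc]
          have hsub : insert c (Finset.univ.filter (fun K : NES N => K.val.card ≠ 1))
              ⊆ Finset.univ := Finset.subset_univ _
          have := Finset.sum_le_sum_of_subset_of_nonneg hsub
            (fun K _ _ => pow_nonneg_of _ (cmat_nonneg p0 hp0) m J K)
          rw [Finset.sum_insert hcF, pow_rowsum_of _ (cmat_rowsum p0 hp0) m J] at this
          have := hδ J
          linarith
      _ = (1 - δ) ^ (k + 1) := by ring

lemma stat_support (p0 : Event N → ℝ) (hp0 : IsDist p0) (m : ℕ) (c : NES N)
    (hc : c.val.card = 1) (δ : ℝ) (hδpos : 0 < δ) (hδ : ∀ I, δ ≤ (cmat p0 ^ m) I c)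
    (q : NES N → ℝ) (hq : IsStatC p0 q) :
    ∀ I : NES N, I.val.card ≠ 1 → q I = 0 := by
  have hδ1 : δ ≤ 1 := by
    refine (hδ c).trans ?_
    calc (cmat p0 ^ m) c c ≤ ∑ K, (cmat p0 ^ m) c K :=
          Finset.single_le_sum (f := fun K => (cmat p0 ^ m) c K)
            (fun K _ => pow_nonneg_of _ (cmat_nonneg p0 hp0) m c K) (mem_univ c)
      _ = 1 := pow_rowsum_of _ (cmat_rowsum p0 hp0) _ _
  intro I hI
  have hfixp := fixed_pow (cmat p0) q hq.2.2
  have hbound : ∀ k : ℕ, q I ≤ (1 - δ) ^ k := by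
    intro k
    have hIF : I ∈ Finset.univ.filter (fun I : NES N => I.val.card ≠ 1) := by
      simp [hI]
    calc q I = ∑ J, q J * (cmat p0 ^ (k * m)) J I := (hfixp (k * m) I).symm
      _ ≤ ∑ J, q J * (1 - δ) ^ k := by
          refine Finset.sum_le_sum fun J _ => mul_le_mul_of_nonneg_left ?_ (hq.1 J)
          calc (cmat p0 ^ (k * m)) J I
              ≤ ∑ I' ∈ Finset.univ.filter (fun I' : NES N => I'.val.card ≠ 1),
                  (cmat p0 ^ (k * m)) J I' :=
                Finset.single_le_sum (f := fun I' => (cmat p0 ^ (k * m)) J I')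
                  (fun I' _ => pow_nonneg_of _ (cmat_nonneg p0 hp0) (k * m) J I') hIF
            _ ≤ (1 - δ) ^ k := ns_bound p0 hp0 m c hc δ hδ k J
      _ = (1 - δ) ^ k := by rw [← Finset.sum_mul, hq.2.1, one_mul]
  have htend : Filter.Tendsto (fun k : ℕ => (1 - δ) ^ k) Filter.atTop (nhds 0) :=
    tendsto_pow_atTop_nhds_zero_of_lt_one (by linarith) (by linarith)
  have hle : q I ≤ 0 := ge_of_tendsto' htend hbound
  exact le_antisymm hle (hq.1 I)

/-- Probability that individual `i` is not replaced. -/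
def noRepl (p0 : Event N → ℝ) (i : Fin N) : ℝ := ∑ e : Event N, if i ∉ e.1 then p0 e else 0

lemma sum_emarg (p0 : Event N → ℝ) (i : Fin N) :
    ∑ j, emarg p0 j i = ∑ e : Event N, if i ∈ e.1 then p0 e else 0 := by
  unfold emarg
  rw [Finset.sum_comm]
  refine Finset.sum_congr rfl fun e _ => ?_
  by_cases h : i ∈ e.1
  · rw [if_pos h]
    calc ∑ j, (if i ∈ e.1 ∧ e.2 i = j then p0 e else 0)
        = ∑ j, (if e.2 i = j then p0 e else 0) := by
          refine Finset.sum_congr rfl fun j _ => ?_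
          congr 1
          simp [h]
      _ = p0 e := by rw [Finset.sum_ite_eq]; simp
  · rw [if_neg h]
    exact Finset.sum_eq_zero fun j _ => if_neg (fun hc => h hc.1)

lemma noRepl_eq (p0 : Event N → ℝ) (hp0 : IsDist p0) (i : Fin N) :
    noRepl p0 i = 1 - ∑ j, emarg p0 j i := by
  rw [sum_emarg]
  have : (∑ e : Event N, if i ∈ e.1 then p0 e else 0) + noRepl p0 i = 1 := by
    unfold noRepl
    rw [← hp0.2, ← Finset.sum_add_distrib]
    refine Finset.sum_congr rfl fun e _ => ?_
    by_cases h : i ∈ e.1 <;> simp [noRepl, h]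
  linarith
  
lemma cmat_single_single (p0 : Event N → ℝ) (i j : Fin N) :
    cmat p0 ⟨{i}, Finset.singleton_nonempty i⟩ ⟨{j}, Finset.singleton_nonempty j⟩
      = emarg p0 j i + (if i = j then noRepl p0 i else 0) := by
  have hL : cmat p0 ⟨{i}, Finset.singleton_nonempty i⟩ ⟨{j}, Finset.singleton_nonempty j⟩
      = ∑ e : Event N, if extMap e i = j then p0 e else 0 := by
    refine Finset.sum_congr rfl fun e _ => ?_
    congr 1
    rw [Finset.image_singleton]
    simp [Finset.singleton_inj]
  rw [hL]
  have hR : (if i = j then noRepl p0 i else 0)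
      = ∑ e : Event N, if i ∉ e.1 ∧ i = j then p0 e else 0 := by
    by_cases h : i = j
    · rw [if_pos h]
      unfold noRepl
      refine Finset.sum_congr rfl fun e _ => ?_
      congr 1
      simp [h]
    · rw [if_neg h]
      exact (Finset.sum_eq_zero fun e _ => if_neg (fun hc => h hc.2)).symm
  rw [hR]
  unfold emarg
  rw [← Finset.sum_add_distrib]
  refine Finset.sum_congr rfl fun e _ => ?_
  by_cases h1 : i ∈ e.1
  · by_cases h2 : e.2 i = j <;> simp [extMap, h1, h2]
  · have hext : extMap e i = i := if_neg h1
    by_cases h2 : i = j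
    · subst h2
      rw [hext]
      simp [h1]
    · rw [hext]
      simp [h1, h2]

/-- The vector on `NES N` supported on singletons with weights `π`. -/
def sglVec (π : Fin N → ℝ) : NES N → ℝ := fun I => ∑ i, if I.val = {i} then π i else 0

lemma sglVec_single (π : Fin N → ℝ) (j : Fin N) :
    sglVec π ⟨{j}, Finset.singleton_nonempty j⟩ = π j := by
  unfold sglVec
  calc ∑ i, (if ({j} : Finset (Fin N)) = {i} then π i else 0)
      = ∑ i, (if j = i then π i else 0) := by
        refine Finset.sum_congr rfl fun i _ => ?_
        congr 1
        simp [Finset.singleton_inj]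
    _ = π j := by rw [Finset.sum_ite_eq]; simp

lemma sglVec_ns (π : Fin N → ℝ) (I : NES N) (hI : I.val.card ≠ 1) : sglVec π I = 0 :=
  Finset.sum_eq_zero fun i _ => if_neg (fun hc => hI (by rw [hc]; simp))

lemma sum_sglVec (π : Fin N → ℝ) : ∑ I : NES N, sglVec π I = ∑ i, π i := by
  unfold sglVec
  rw [Finset.sum_comm]
  refine Finset.sum_congr rfl fun i _ => ?_
  calc ∑ I : NES N, (if I.val = {i} then π i else 0)
      = ∑ I : NES N, (if (⟨{i}, Finset.singleton_nonempty i⟩ : NES N) = I then π i else 0) := by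
        refine Finset.sum_congr rfl fun I _ => ?_
        congr 1
        rw [Subtype.ext_iff]
        simp [eq_comm]
    _ = π i := by rw [Finset.sum_ite_eq]; simp

lemma sglVec_collapse (p0 : Event N → ℝ) (π : Fin N → ℝ) (J : NES N) :
    ∑ I : NES N, sglVec π I * cmat p0 I J
      = ∑ i, π i * cmat p0 ⟨{i}, Finset.singleton_nonempty i⟩ J := by
  unfold sglVec
  simp only [Finset.sum_mul]
  rw [Finset.sum_comm]
  refine Finset.sum_congr rfl fun i _ => ?_
  calc ∑ I : NES N, (if I.val = {i} then π i else 0) * cmat p0 I J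
      = ∑ I : NES N, (if (⟨{i}, Finset.singleton_nonempty i⟩ : NES N) = I
          then π i * cmat p0 I J else 0) := by
        refine Finset.sum_congr rfl fun I _ => ?_
        by_cases h : I.val = {i}
        · have : (⟨{i}, Finset.singleton_nonempty i⟩ : NES N) = I := by
            rw [Subtype.ext_iff]; exact h.symm
          rw [if_pos h, if_pos this]
        · have : ¬ ((⟨{i}, Finset.singleton_nonempty i⟩ : NES N) = I) := by
            rw [Subtype.ext_iff]; exact fun hc => h hc.symm
          rw [if_neg h, if_neg this, zero_mul]
    _ = π i * cmat p0 ⟨{i}, Finset.singleton_nonempty i⟩ J := by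
        rw [Finset.sum_ite_eq]; simp

lemma rv_fixed (p0 : Event N → ℝ) (hp0 : IsDist p0) (π : Fin N → ℝ) (hπ : IsRV p0 π) :
    ∀ J : NES N, ∑ I : NES N, sglVec π I * cmat p0 I J = sglVec π J := by
  intro J
  rw [sglVec_collapse]
  by_cases hJ : J.val.card = 1
  · obtain ⟨j, hj⟩ := Finset.card_eq_one.mp hJ
    have hJj : J = ⟨{j}, Finset.singleton_nonempty j⟩ := Subtype.ext hj
    rw [hJj, sglVec_single]
    have hsplit : ∀ i, π i * cmat p0 ⟨{i}, Finset.singleton_nonempty i⟩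
        ⟨{j}, Finset.singleton_nonempty j⟩
        = π i * emarg p0 j i + (if i = j then π i * noRepl p0 i else 0) := by
      intro i
      rw [cmat_single_single]
      by_cases h : i = j <;> simp [h] <;> ring
    simp only [hsplit]
    rw [Finset.sum_add_distrib]
    have h2 : ∑ i, (if i = j then π i * noRepl p0 i else 0) = π j * noRepl p0 j := by
      rw [Finset.sum_ite_eq']; simp
    rw [h2, noRepl_eq p0 hp0]
    have h3 : ∑ i, π i * emarg p0 j i = ∑ i, emarg p0 i j * π j := by
      rw [← hπ.1 j]
      exact Finset.sum_congr rfl fun i _ => mul_comm _ _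
    rw [h3, ← Finset.sum_mul]
    ring
  · rw [sglVec_ns π J hJ]
    refine Finset.sum_eq_zero fun i _ => ?_
    rw [cmat_single_ns p0 i J hJ, mul_zero]

lemma fixed_rv (p0 : Event N → ℝ) (hp0 : IsDist p0) (π' : Fin N → ℝ)
    (h : ∀ j, ∑ i, π' i * cmat p0 ⟨{i}, Finset.singleton_nonempty i⟩
      ⟨{j}, Finset.singleton_nonempty j⟩ = π' j) :
    ∀ i, ∑ j, emarg p0 i j * π' j = ∑ j, emarg p0 j i * π' i := by
  intro i
  have hi := h i
  have hsplit : ∀ k, π' k * cmat p0 ⟨{k}, Finset.singleton_nonempty k⟩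
      ⟨{i}, Finset.singleton_nonempty i⟩
      = emarg p0 i k * π' k + (if k = i then π' k * noRepl p0 k else 0) := by
    intro k
    rw [cmat_single_single]
    by_cases hk : k = i <;> simp [hk] <;> ring
  simp only [hsplit] at hi
  rw [Finset.sum_add_distrib] at hi
  have h2 : ∑ k, (if k = i then π' k * noRepl p0 k else 0) = π' i * noRepl p0 i := by
    rw [Finset.sum_ite_eq']; simp
  rw [h2, noRepl_eq p0 hp0 i] at hi
  have h3 : ∑ j, emarg p0 j i * π' i = (∑ j, emarg p0 j i) * π' i := by
    rw [Finset.sum_mul]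
  rw [h3]
  have h4 : ∑ j, emarg p0 i j * π' j = ∑ k, emarg p0 i k * π' k := rfl
  rw [h4]
  nlinarith [hi]

end Aux2

/-- under the Fixation Axiom, the coalescent chain `𝒞` has a single closed
communicating class consisting only of singletons, and a unique stationary distribution,
which is concentrated on singletons with `q({i}) = π_i`. -/
theorem statement9 {N : ℕ} (p0 : Event N → ℝ) (hp0 : IsDist p0)
    (hfix : FixAxiom fun _ : St N => p0)
    (π : Fin N → ℝ) (hπ : IsRV p0 π) :
    (∃! S : Set (NES N), IsCCC p0 S) ∧
    (∀ S : Set (NES N), IsCCC p0 S → ∀ I ∈ S, I.val.card = 1) ∧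
    (∃! q : NES N → ℝ, IsStatC p0 q) ∧
    (∀ q : NES N → ℝ, IsStatC p0 q →
      (∀ I : NES N, I.val.card ≠ 1 → q I = 0) ∧
      ∀ i : Fin N, q ⟨{i}, Finset.singleton_nonempty i⟩ = π i) := by
  obtain ⟨istar, m, ev, hm, hposx, _, hcomp⟩ := hfix
  have hpos : ∀ k, 0 < p0 (ev k) := fun k => hposx k (fun _ => true)
  set c : NES N := ⟨{istar}, Finset.singleton_nonempty istar⟩ with hc
  have hccard : c.val.card = 1 := Finset.card_singleton istar
  set δ : ℝ := (List.ofFn ev).foldr (fun e r => p0 e * r) 1 with hδdef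
  have hδpos : 0 < δ := by
    refine foldr_pos p0 _ fun e he => ?_
    obtain ⟨k, hk⟩ := List.mem_ofFn.mp he
    exact hk ▸ hpos k
  have hδ : ∀ I : NES N, δ ≤ (cmat p0 ^ m) I c := cmat_doeblin p0 hp0 m ev istar hcomp
  haveI : Nonempty (NES N) := ⟨c⟩
  have hreach : ∀ I : NES N, leadsTo p0 I c := fun I =>
    pos_pow_leadsTo p0 hp0 m I c (lt_of_lt_of_le hδpos (hδ I))
  have hlead_closed : ∀ (S : Set (NES N)), (∀ I ∈ S, ∀ J, 0 < cmat p0 I J → J ∈ S) →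
      ∀ I ∈ S, ∀ J, leadsTo p0 I J → J ∈ S := by
    intro S hcl I hI J hIJ
    induction hIJ with
    | refl => exact hI
    | tail _ h2 ih => exact hcl _ ih _ h2
  have hSstar : IsCCC p0 {J : NES N | leadsTo p0 c J} := by
    refine ⟨⟨c, Relation.ReflTransGen.refl⟩, ?_, ?_⟩
    · intro I hI J hIJ
      exact Relation.ReflTransGen.tail hI hIJ
    · intro I hI J hJ
      exact Relation.ReflTransGen.trans (hreach I) hJ
  have hCCCuniq : ∀ S : Set (NES N), IsCCC p0 S → S = {J : NES N | leadsTo p0 c J} := by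
    intro S hS
    obtain ⟨I₀, hI₀⟩ := hS.1
    have hcS : c ∈ S := hlead_closed S hS.2.1 I₀ hI₀ c (hreach I₀)
    ext J
    constructor
    · intro hJS
      exact hS.2.2 c hcS J hJS
    · intro hJ
      exact hlead_closed S hS.2.1 c hcS J hJ
  have part1 : ∃! S : Set (NES N), IsCCC p0 S :=
    ⟨{J : NES N | leadsTo p0 c J}, hSstar, fun S hS => hCCCuniq S hS⟩
  have part2 : ∀ S : Set (NES N), IsCCC p0 S → ∀ I ∈ S, I.val.card = 1 := by
    intro S hS I hI
    rw [hCCCuniq S hS] at hI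
    exact leadsTo_card p0 hp0 c I hI hccard
  have huniq : ∀ q q' : NES N → ℝ, IsStatC p0 q → IsStatC p0 q' → q = q' := by
    intro q q' hq hq'
    have hfixd : ∀ J, ∑ I, (q I - q' I) * cmat p0 I J = q J - q' J := by
      intro J
      simp only [sub_mul, Finset.sum_sub_distrib]
      rw [hq.2.2 J, hq'.2.2 J]
    have hsumd : ∑ I, (q I - q' I) = 0 := by
      rw [Finset.sum_sub_distrib, hq.2.1, hq'.2.1, sub_self]
    have hz := fixed_sum_zero (cmat p0) (cmat_nonneg p0 hp0) (cmat_rowsum p0 hp0)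
      m c δ hδpos hδ (fun I => q I - q' I) hfixd hsumd
    funext I
    have := congrFun hz I
    simp only [Pi.zero_apply] at this
    linarith
  have part3 : ∃! q : NES N → ℝ, IsStatC p0 q := by
    obtain ⟨q₀, hq₀0, hq₀1, hq₀2⟩ :=
      exists_stationary (cmat p0) (cmat_nonneg p0 hp0) (cmat_rowsum p0 hp0)
    exact ⟨q₀, ⟨hq₀0, hq₀1, hq₀2⟩, fun q' hq' => huniq q' q₀ hq' ⟨hq₀0, hq₀1, hq₀2⟩⟩
  refine ⟨part1, part2, part3, ?_⟩
  intro q hq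
  have hsupp : ∀ I : NES N, I.val.card ≠ 1 → q I = 0 :=
    stat_support p0 hp0 m c hccard δ hδpos hδ q hq
  refine ⟨hsupp, ?_⟩
  set π' : Fin N → ℝ := fun i => q ⟨{i}, Finset.singleton_nonempty i⟩ with hπ'def
  have hqsgl : q = sglVec π' := by
    funext I
    by_cases hI : I.val.card = 1
    · obtain ⟨a, ha⟩ := Finset.card_eq_one.mp hI
      have hIa : I = ⟨{a}, Finset.singleton_nonempty a⟩ := Subtype.ext ha
      rw [hIa, sglVec_single]
    · rw [hsupp I hI, sglVec_ns π' I hI]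
  have hfixq : ∀ j, ∑ i, π' i * cmat p0 ⟨{i}, Finset.singleton_nonempty i⟩
      ⟨{j}, Finset.singleton_nonempty j⟩ = π' j := by
    intro j
    have h1 := hq.2.2 ⟨{j}, Finset.singleton_nonempty j⟩
    rw [hqsgl] at h1
    rw [sglVec_collapse p0 π', sglVec_single] at h1
    exact h1
  have hrv' : IsRV p0 π' := by
    refine ⟨fixed_rv p0 hp0 π' hfixq, ?_⟩
    rw [← sum_sglVec π', ← hqsgl]
    exact hq.2.1
  have hππ' : π = π' := by
    have hfix1 := rv_fixed p0 hp0 π hπ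
    have hfix2 := rv_fixed p0 hp0 π' hrv'
    have hfixd : ∀ J, ∑ I, (sglVec π I - sglVec π' I) * cmat p0 I J
        = sglVec π J - sglVec π' J := by
      intro J
      simp only [sub_mul, Finset.sum_sub_distrib]
      rw [hfix1 J, hfix2 J]
    have hsumd : ∑ I, (sglVec π I - sglVec π' I) = 0 := by
      rw [Finset.sum_sub_distrib, sum_sglVec, sum_sglVec, hπ.2, hrv'.2, sub_self]
    have hz := fixed_sum_zero (cmat p0) (cmat_nonneg p0 hp0) (cmat_rowsum p0 hp0)
      m c δ hδpos hδ (fun I => sglVec π I - sglVec π' I) hfixd hsumd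
    funext i
    have := congrFun hz ⟨{i}, Finset.singleton_nonempty i⟩
    simp only [Pi.zero_apply, sglVec_single] at this
    linarith
  intro i
  rw [hππ']

end Evo
end
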